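/- In a transposed Poisson algebra A, the transposed Poisson center A^A is a transposed Poisson subalgebra of A (it is a subalgebra of the associative algebra and a Lie subalgebra). -/
import Mathlib


open TensorProduct

/-- A transposed Poisson algebra structure on a commutative unital `k`-algebra `A`:
a Lie bracket satisfying the transposed Leibniz rule `2a{b,c} = {ab,c} + {b,ac}`. -/
structure TPA (k A : Type*) [Field k] [CharZero k] [CommRing A] [Algebra k A] where
  br : A →ₗ[k] A →ₗ[k] A
  skew : ∀ a b, br a b = - br b a
  jacobi : ∀ a b c, br a (br b c) = br (br a b) c + br b (br a c)
  leibniz : ∀ a b c, 2 * a * br b c = br (a * b) c + br b (a * c)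

/-- The transposed Poisson center `A^A = {b | b{a,a'} = {ba,a'} for all a,a'}`. -/
def TPA.center {k A : Type*} [Field k] [CharZero k] [CommRing A] [Algebra k A]
    (P : TPA k A) : Set A := {b | ∀ a a', b * P.br a a' = P.br (b * a) a'}

section Aux

variable {k A : Type*} [Field k] [CharZero k] [CommRing A] [Algebra k A] (P : TPA k A)

lemma TPA.two_cancel (P : TPA k A) (x y : A) (h : (2 : A) * x = 2 * y) : x = y := by
  have h2 : (algebraMap k A) (2 : k) = (2 : A) := map_ofNat _ 2
  have hinv : (algebraMap k A) (2⁻¹ : k) * (2 : A) = 1 := by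
    rw [← h2, ← map_mul]
    norm_num
  calc x = ((algebraMap k A) (2⁻¹ : k) * 2) * x := by rw [hinv, one_mul]
    _ = (algebraMap k A) (2⁻¹ : k) * (2 * x) := by ring
    _ = (algebraMap k A) (2⁻¹ : k) * (2 * y) := by rw [h]
    _ = ((algebraMap k A) (2⁻¹ : k) * 2) * y := by ring
    _ = y := by rw [hinv, one_mul]

lemma TPA.der (a c : A) : P.br 1 (a * c) = a * P.br 1 c + c * P.br 1 a := by
  apply P.two_cancel
  have h1 := P.leibniz a 1 c
  have h2 := P.leibniz c 1 a
  rw [mul_one] at h1 h2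
  rw [mul_comm c a] at h2
  have hs := P.skew a c
  linear_combination (-1 : A) * h1 - h2 - hs

lemma TPA.br_eq (a c : A) : P.br a c = a * P.br 1 c - c * P.br 1 a := by
  have h1 := P.leibniz a 1 c
  rw [mul_one] at h1
  have hd := P.der a c
  linear_combination (-1 : A) * h1 - hd

lemma TPA.br_one_one : P.br 1 (1 : A) = 0 := by
  apply P.two_cancel
  have hs := P.skew 1 1
  linear_combination hs

lemma TPA.mem_center_iff (b : A) : b ∈ P.center ↔ P.br 1 b = 0 := by
  constructor
  · intro hb
    have h := hb 1 1
    rw [mul_one, P.br_one_one, mul_zero] at h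
    have hb1 := P.br_eq b 1
    rw [P.br_one_one, mul_zero, one_mul] at hb1
    linear_combination hb1 + h
  · intro hb a a'
    have h1 := P.br_eq a a'
    have h2 := P.br_eq (b * a) a'
    have h3 := P.der b a
    rw [h1, h2, h3, hb]
    ring

end Aux

theorem center_is_subalgebra {k A : Type*} [Field k] [CharZero k]
    [CommRing A] [Algebra k A] (P : TPA k A) :
    (1 : A) ∈ P.center ∧
    (∀ b b' : A, b ∈ P.center → b' ∈ P.center → b + b' ∈ P.center) ∧
    (∀ (r : k) (b : A), b ∈ P.center → r • b ∈ P.center) ∧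
    (∀ b b' : A, b ∈ P.center → b' ∈ P.center → b * b' ∈ P.center) ∧
    (∀ b b' : A, b ∈ P.center → b' ∈ P.center → P.br b b' ∈ P.center) := by
  refine ⟨?_, ?_, ?_, ?_, ?_⟩
  · rw [P.mem_center_iff]
    exact P.br_one_one
  · intro b b' hb hb'
    rw [P.mem_center_iff] at hb hb' ⊢
    rw [map_add, hb, hb', add_zero]
  · intro r b hb
    rw [P.mem_center_iff] at hb ⊢
    rw [map_smul, hb, smul_zero]
  · intro b b' hb hb'
    rw [P.mem_center_iff] at hb hb' ⊢
    rw [P.der, hb, hb', mul_zero, mul_zero, add_zero]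
  · intro b b' hb hb'
    rw [P.mem_center_iff] at hb hb'
    have h : P.br b b' = 0 := by
      rw [P.br_eq, hb, hb', mul_zero, mul_zero, sub_zero]
    rw [h, P.mem_center_iff, map_zero]
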